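/- Let C₁ and C₂ be r×r positive semidefinite complex matrices, and let D₁,…,D_m be r×r positive semidefinite complex matrices with ∑_{y=1}^m D_y = I (an r-dimensional POVM). Then ( ∑_{y=1}^m √(tr(C₁ D_y)) · √(tr(C₂ D_y)) )² ≥ tr(C₁ C₂). -/

import Mathlib

open Matrix
open scoped ComplexOrder

attribute [local instance] Matrix.frobeniusSeminormedAddCommGroup
attribute [local instance] Matrix.frobeniusNormedRing

lemma trace_conjTranspose_mul_self_re {r : ℕ} (A : Matrix (Fin r) (Fin r) ℂ) :
    (Aᴴ * A).trace.re = ‖A‖ ^ 2 := by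
  have h : (Aᴴ * A).trace.re = ∑ j, ∑ i, ‖A i j‖ ^ 2 := by
    simp only [Matrix.trace, Matrix.diag, Matrix.mul_apply, Matrix.conjTranspose_apply,
      Complex.re_sum]
    refine Finset.sum_congr rfl fun j _ => Finset.sum_congr rfl fun i _ => ?_
    rw [Complex.star_def, ← Complex.normSq_eq_conj_mul_self, Complex.normSq_eq_norm_sq]
    exact Complex.ofReal_re _
  have h2 : ‖A‖ ^ 2 = ∑ i, ∑ j, ‖A i j‖ ^ 2 := by
    rw [Matrix.frobenius_norm_def, ← Real.rpow_natCast _ 2, ← Real.rpow_mul (by positivity)]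
    norm_num
  rw [h, h2, Finset.sum_comm]

open scoped MatrixOrder in
lemma psd_exists_herm_sqrt {r : ℕ} {C : Matrix (Fin r) (Fin r) ℂ} (hC : C.PosSemidef) :
    ∃ S : Matrix (Fin r) (Fin r) ℂ, Sᴴ = S ∧ S * S = C := by
  obtain ⟨X, hX, -, hXX⟩ := CFC.exists_sqrt_of_isSelfAdjoint_of_quasispectrumRestricts
    hC.nonneg.isSelfAdjoint (QuasispectrumRestricts.nnreal_of_nonneg hC.nonneg)
  exact ⟨X, hX.star_eq, hXX⟩

theorem classical_fidelity_squared_ge_trace_product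
    (r m : ℕ) (C₁ C₂ : Matrix (Fin r) (Fin r) ℂ)
    (hC₁ : C₁.PosSemidef) (hC₂ : C₂.PosSemidef)
    (D : Fin m → Matrix (Fin r) (Fin r) ℂ)
    (hD : ∀ y, (D y).PosSemidef) (hDsum : ∑ y, D y = 1) :
    (C₁ * C₂).trace.re ≤
      (∑ y, Real.sqrt ((C₁ * D y).trace.re) * Real.sqrt ((C₂ * D y).trace.re)) ^ 2 := by
  obtain ⟨S₁, hS₁h, hS₁sq⟩ : ∃ S : Matrix (Fin r) (Fin r) ℂ, Sᴴ = S ∧ S * S = C₁ :=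
    psd_exists_herm_sqrt hC₁
  obtain ⟨S₂, hS₂h, hS₂sq⟩ : ∃ S : Matrix (Fin r) (Fin r) ℂ, Sᴴ = S ∧ S * S = C₂ :=
    psd_exists_herm_sqrt hC₂
  -- trace (C₁ C₂) = ‖S₂ S₁‖²
  have key1 : (C₁ * C₂).trace.re = ‖S₂ * S₁‖ ^ 2 := by
    rw [← trace_conjTranspose_mul_self_re (S₂ * S₁)]
    congr 1
    rw [conjTranspose_mul, hS₁h, hS₂h]
    calc (C₁ * C₂).trace = (C₂ * C₁).trace := Matrix.trace_mul_comm _ _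
      _ = ((S₂ * S₂ * S₁) * S₁).trace := by rw [← hS₁sq, ← hS₂sq]; simp [Matrix.mul_assoc]
      _ = (S₁ * (S₂ * S₂ * S₁)).trace := (Matrix.trace_mul_comm _ _).symm
      _ = (S₁ * S₂ * (S₂ * S₁)).trace := by simp [Matrix.mul_assoc]
  -- per-term norm bounds
  have termbound : ∀ y, ‖S₂ * D y * S₁‖ ≤
      Real.sqrt ((C₁ * D y).trace.re) * Real.sqrt ((C₂ * D y).trace.re) := by
    intro y
    obtain ⟨Q, hQh, hQsq⟩ : ∃ Q : Matrix (Fin r) (Fin r) ℂ, Qᴴ = Q ∧ Q * Q = D y :=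
      psd_exists_herm_sqrt (hD y)
    have hsplit : S₂ * D y * S₁ = (S₂ * Q) * (Q * S₁) := by
      rw [← hQsq]; simp [Matrix.mul_assoc]
    have h1 : ‖S₂ * Q‖ = Real.sqrt ((C₂ * D y).trace.re) := by
      have hh : ((S₂ * Q)ᴴ * (S₂ * Q)).trace.re = (C₂ * D y).trace.re := by
        congr 1
        rw [conjTranspose_mul, hS₂h, hQh]
        calc (Q * S₂ * (S₂ * Q)).trace
            = (Q * (S₂ * S₂ * Q)).trace := by simp [Matrix.mul_assoc]
          _ = ((S₂ * S₂ * Q) * Q).trace := Matrix.trace_mul_comm _ _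
          _ = (C₂ * D y).trace := by rw [Matrix.mul_assoc, hQsq, hS₂sq]
      rw [trace_conjTranspose_mul_self_re] at hh
      rw [← hh, Real.sqrt_sq (norm_nonneg _)]
    have h2 : ‖Q * S₁‖ = Real.sqrt ((C₁ * D y).trace.re) := by
      have hh : ((Q * S₁)ᴴ * (Q * S₁)).trace.re = (C₁ * D y).trace.re := by
        congr 1
        rw [conjTranspose_mul, hS₁h, hQh]
        calc (S₁ * Q * (Q * S₁)).trace
            = (S₁ * (Q * Q * S₁)).trace := by simp [Matrix.mul_assoc]
          _ = ((Q * Q * S₁) * S₁).trace := Matrix.trace_mul_comm _ _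
          _ = (C₁ * D y).trace := by
              rw [hQsq, Matrix.mul_assoc, hS₁sq, Matrix.trace_mul_comm]
      rw [trace_conjTranspose_mul_self_re] at hh
      rw [← hh, Real.sqrt_sq (norm_nonneg _)]
    calc ‖S₂ * D y * S₁‖ = ‖(S₂ * Q) * (Q * S₁)‖ := by rw [hsplit]
      _ ≤ ‖S₂ * Q‖ * ‖Q * S₁‖ := norm_mul_le _ _
      _ = Real.sqrt ((C₂ * D y).trace.re) * Real.sqrt ((C₁ * D y).trace.re) := by rw [h1, h2]
      _ = Real.sqrt ((C₁ * D y).trace.re) * Real.sqrt ((C₂ * D y).trace.re) := mul_comm _ _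
  -- triangle inequality
  have hsum : S₂ * S₁ = ∑ y, S₂ * D y * S₁ := by
    simp_rw [← Finset.sum_mul, ← Finset.mul_sum, hDsum, Matrix.mul_one]
  have tri : ‖S₂ * S₁‖ ≤ ∑ y, Real.sqrt ((C₁ * D y).trace.re) * Real.sqrt ((C₂ * D y).trace.re) :=
    calc ‖S₂ * S₁‖ = ‖∑ y, S₂ * D y * S₁‖ := by rw [hsum]
      _ ≤ ∑ y, ‖S₂ * D y * S₁‖ := norm_sum_le _ _
      _ ≤ _ := Finset.sum_le_sum fun y _ => termbound y
  rw [key1]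
  exact pow_le_pow_left₀ (norm_nonneg _) tri 2
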